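/- For any marked graph G and any vertex v, the marked-graph bracket satisfies [G] = [G_cru^v]. More precisely, for every subset T ⊆ V(G), ν(𝒜(G)_T) = ν(𝒜(G_cru^v)_T). -/

import Mathlib

/-- The six vertex marks of a multiply marked graph. -/
inductive Mark : Type
  | un | r | c | cr | u | ur
deriving DecidableEq

/-- A (multiply marked) graph: symmetric irreflexive adjacency, loops,
marks, and a number of free loops. -/
structure MGraph (V : Type) [DecidableEq V] : Type where
  adj : V → V → Bool
  adj_symm : ∀ x y, adj x y = adj y x
  adj_irrefl : ∀ x, adj x x = false
  loop : V → Bool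
  mark : V → Mark
  freeLoops : ℕ

namespace MGraph

variable {V : Type} [DecidableEq V]

/-- The mark change at `v` itself: unmarked↔u, r↔ur, c↔cr. -/
def flipV : Mark → Mark
  | .un => .u | .u => .un | .r => .ur | .ur => .r | .c => .cr | .cr => .c

/-- The mark change at neighbors of `v`: unmarked↔r, c↔ur, u↔cr. -/
def flipN : Mark → Mark
  | .un => .r | .r => .un | .c => .ur | .ur => .c | .u => .cr | .cr => .u

/-- The marked local complement `G_cru^v`. -/
def mlc (G : MGraph V) (v : V) : MGraph V where
  adj x y := if x ≠ y ∧ G.adj v x = true ∧ G.adj v y = true then !(G.adj x y) else G.adj x y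
  adj_symm := by
    intro x y
    by_cases h : x ≠ y ∧ G.adj v x = true ∧ G.adj v y = true
    · rw [if_pos h, if_pos ⟨h.1.symm, h.2.2, h.2.1⟩, G.adj_symm]
    · rw [if_neg h, if_neg (fun h' => h ⟨h'.1.symm, h'.2.2, h'.2.1⟩), G.adj_symm]
  adj_irrefl := by
    intro x
    rw [if_neg (fun h => h.1 rfl), G.adj_irrefl]
  loop := G.loop
  mark x := if x = v then flipV (G.mark x)
            else if G.adj v x = true then flipN (G.mark x) else G.mark x
  freeLoops := G.freeLoops

end MGraph

/-- Whether a mark contains the letter `r`. -/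
def Mark.hasR : Mark → Bool
  | .r => true | .cr => true | .ur => true | _ => false

/-- Whether a mark is `c` or `cr`. -/
def Mark.isC : Mark → Bool
  | .c => true | .cr => true | _ => false

/-- Whether a mark is `u` or `ur`. -/
def Mark.isU : Mark → Bool
  | .u => true | .ur => true | _ => false

/-- GF(2)-nullity of a square matrix. -/
noncomputable def nullity {n : Type} [Fintype n] (M : Matrix n n (ZMod 2)) : ℕ :=
  Fintype.card n - M.rank

namespace MGraph

variable {V : Type} [DecidableEq V]

/-- The matrix `𝒜(G) + Δ_T` over GF(2): off-diagonal entries record adjacency,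
and the diagonal entry at `x` is the loop contribution plus the `Δ_T` entry,
which is `1` iff (`x ∈ T` and the mark of `x` has no `r`) or (`x ∉ T` and it has an `r`). -/
def matT (G : MGraph V) (T : Finset V) : Matrix V V (ZMod 2) :=
  Matrix.of fun x y =>
    if x = y then
      (if G.loop x = true then 1 else 0) +
        (if ((x ∈ T) ↔ (G.mark x).hasR = false) then 1 else 0)
    else if G.adj x y = true then 1 else 0

/-- The vertices whose rows and columns are kept in `𝒜(G)_T`: delete `x` iff
`x` is marked `c`/`cr` with diagonal entry `0`, or marked `u`/`ur` with diagonal entry `1`. -/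
def keep (G : MGraph V) (T : Finset V) (x : V) : Bool :=
  !(((G.mark x).isC && decide (G.matT T x x = 0)) ||
    ((G.mark x).isU && decide (G.matT T x x = 1)))

/-- The matrix `𝒜(G)_T`, the submatrix of `𝒜(G) + Δ_T` on the kept vertices. -/
def subMat (G : MGraph V) (T : Finset V) :
    Matrix {x : V // G.keep T x = true} {x : V // G.keep T x = true} (ZMod 2) :=
  (G.matT T).submatrix Subtype.val Subtype.val

/-- The marked-graph bracket polynomial, evaluated at elements `A`, `B`, `d`
of a commutative ring. -/
noncomputable def bracket (G : MGraph V) [Fintype V] {R : Type*} [CommRing R]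
    (A B d : R) : R :=
  d ^ G.freeLoops *
    ∑ T : Finset V, A ^ (Fintype.card V - T.card) * B ^ T.card * d ^ nullity (G.subMat T)

/-- The weighted marked-graph bracket polynomial with vertex weights `α`, `β`. -/
noncomputable def wbracket (G : MGraph V) [Fintype V] {R : Type*} [CommRing R]
    (d : R) (α β : V → R) : R :=
  d ^ G.freeLoops *
    ∑ T : Finset V, (∏ x ∈ Tᶜ, α x) * (∏ x ∈ T, β x) * d ^ nullity (G.subMat T)

/-- Deletion of the vertex `v`. -/
def delete (G : MGraph V) (v : V) : MGraph {x : V // x ≠ v} where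
  adj x y := G.adj x.val y.val
  adj_symm := fun x y => G.adj_symm x.val y.val
  adj_irrefl := fun x => G.adj_irrefl x.val
  loop x := G.loop x.val
  mark x := G.mark x.val
  freeLoops := G.freeLoops

/-- Change the mark of the vertex `v` to `m`. -/
def setMark (G : MGraph V) (v : V) (m : Mark) : MGraph V :=
  { G with mark := fun x => if x = v then m else G.mark x }

/-- The one-vertex graph with given loop status and mark (and no free loops). -/
def single (l : Bool) (m : Mark) : MGraph Unit where
  adj _ _ := false
  adj_symm := fun _ _ => rfl
  adj_irrefl := fun _ => rfl
  loop _ := l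
  mark _ := m
  freeLoops := 0

end MGraph


section Aux
set_option maxHeartbeats 1000000

open Matrix in
lemma nullity_eq_finrank_ker {n : Type} [Fintype n] [DecidableEq n]
    (M : Matrix n n (ZMod 2)) :
    nullity M = Module.finrank (ZMod 2) (LinearMap.ker M.mulVecLin) := by
  have h := LinearMap.finrank_range_add_finrank_ker M.mulVecLin
  rw [Module.finrank_pi] at h
  unfold nullity Matrix.rank
  omega

lemma sum_split {n : Type} [Fintype n] [DecidableEq n] (v : n) (f : n → ZMod 2) :
    ∑ z, f z = f v + ∑ z : {z : n // z ≠ v}, f z := by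
  rw [← Finset.add_sum_erase Finset.univ f (Finset.mem_univ v)]
  congr 1
  apply Finset.sum_bij (fun (x : n) (hx : x ∈ Finset.univ.erase v) =>
    (⟨x, (Finset.mem_erase.mp hx).1⟩ : {z : n // z ≠ v}))
  · intros; exact Finset.mem_univ _
  · intro a ha b hb h; exact congrArg Subtype.val h
  · intro b _; exact ⟨b.1, Finset.mem_erase.mpr ⟨b.2, Finset.mem_univ _⟩, Subtype.ext rfl⟩
  · intros; rfl

section LinAlg
variable {n : Type} [Fintype n] [DecidableEq n]
open Matrix

/-- The involution `x ↦ x + (M v ⬝ x) • e_v`. -/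
noncomputable def phiMap (M : Matrix n n (ZMod 2)) (v : n) :
    (n → ZMod 2) →ₗ[ZMod 2] (n → ZMod 2) where
  toFun x := fun z => x z + if z = v then ∑ t, M v t * x t else 0
  map_add' x y := by
    funext z
    by_cases h : z = v <;>
      simp [h, mul_add, Finset.sum_add_distrib] <;> ring
  map_smul' c x := by
    funext z
    by_cases h : z = v <;>
      simp [h, Finset.mul_sum, mul_add]
    ring_nf
    exact Finset.sum_congr rfl (fun t _ => by ring)

lemma phiMap_invol (M : Matrix n n (ZMod 2)) (v : n) (h0 : M v v = 0)
    (x : n → ZMod 2) : phiMap M v (phiMap M v x) = x := by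
  have h2 : ∀ b a : ZMod 2, b + a + a = b := by decide
  funext z
  by_cases h : z = v
  · subst h
    simp only [phiMap, LinearMap.coe_mk, AddHom.coe_mk, if_pos rfl]
    have h3 : ∑ t, M z t * (x t + if t = z then ∑ t', M z t' * x t' else 0)
        = ∑ t, M z t * x t := by
      rw [Finset.sum_congr rfl (fun t _ => mul_add _ _ _), Finset.sum_add_distrib]
      have h4 : ∑ t, M z t * (if t = z then ∑ t', M z t' * x t' else 0) = 0 := by
        simp [mul_ite, Finset.sum_ite_eq', h0]
      rw [h4, add_zero]
    rw [h3]
    exact h2 _ _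
  · simp [phiMap, h]

lemma mulVec_perturb (M : Matrix n n (ZMod 2)) (v : n) (x : n → ZMod 2) :
    (Matrix.of fun a b => M a b + M a v * M v b).mulVec x = M.mulVec (phiMap M v x) := by
  funext r
  simp only [Matrix.mulVec, dotProduct, Matrix.of_apply, phiMap,
    LinearMap.coe_mk, AddHom.coe_mk]
  rw [Finset.sum_congr rfl (fun z _ => add_mul (M r z) (M r v * M v z) (x z)),
    Finset.sum_add_distrib,
    Finset.sum_congr (M := ZMod 2) rfl
      (fun z _ => mul_add (M r z) (x z) (if z = v then ∑ t, M v t * x t else 0)),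
    Finset.sum_add_distrib]
  congr 1
  simp [mul_ite, mul_zero, Finset.sum_ite_eq', Finset.mul_sum, mul_assoc]

/-- Map between kernels of two matrices induced by a linear map. -/
noncomputable def kerMap {m : Type} [Fintype m]
    (A : Matrix n n (ZMod 2)) (B : Matrix m m (ZMod 2))
    (φ : (m → ZMod 2) →ₗ[ZMod 2] (n → ZMod 2))
    (h : ∀ x, B.mulVecLin x = 0 → A.mulVecLin (φ x) = 0) :
    (LinearMap.ker B.mulVecLin) →ₗ[ZMod 2] (LinearMap.ker A.mulVecLin) :=
  LinearMap.codRestrict _ (φ.comp (LinearMap.ker B.mulVecLin).subtype)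
    (fun c => by
      have := h c.1 c.2
      simpa [LinearMap.mem_ker] using this)

lemma kerMap_apply {m : Type} [Fintype m]
    (A : Matrix n n (ZMod 2)) (B : Matrix m m (ZMod 2))
    (φ : (m → ZMod 2) →ₗ[ZMod 2] (n → ZMod 2))
    (h : ∀ x, B.mulVecLin x = 0 → A.mulVecLin (φ x) = 0)
    (x : LinearMap.ker B.mulVecLin) : (kerMap A B φ h x).1 = φ x.1 := rfl

lemma nullity_eq_of_kerMaps {m : Type} [Fintype m] [DecidableEq m]
    (A : Matrix n n (ZMod 2)) (B : Matrix m m (ZMod 2))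
    (φ : (m → ZMod 2) →ₗ[ZMod 2] (n → ZMod 2))
    (ψ : (n → ZMod 2) →ₗ[ZMod 2] (m → ZMod 2))
    (hφ : ∀ x, B.mulVecLin x = 0 → A.mulVecLin (φ x) = 0)
    (hψ : ∀ x, A.mulVecLin x = 0 → B.mulVecLin (ψ x) = 0)
    (hφinj : ∀ x, B.mulVecLin x = 0 → φ x = 0 → x = 0)
    (hψinj : ∀ x, A.mulVecLin x = 0 → ψ x = 0 → x = 0) :
    nullity A = nullity B := by
  rw [nullity_eq_finrank_ker, nullity_eq_finrank_ker]
  have h1 : Function.Injective (kerMap A B φ hφ) := by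
    intro a b hab
    have h := congrArg Subtype.val hab
    rw [kerMap_apply, kerMap_apply] at h
    have : φ (a.1 - b.1) = 0 := by rw [map_sub, h, sub_self]
    have hz : (a.1 - b.1) = 0 := by
      apply hφinj _ _ this
      rw [map_sub]
      rw [LinearMap.mem_ker.mp a.2, LinearMap.mem_ker.mp b.2, sub_self]
    exact Subtype.ext (by rwa [sub_eq_zero] at hz)
  have h2 : Function.Injective (kerMap B A ψ hψ) := by
    intro a b hab
    have h := congrArg Subtype.val hab
    rw [kerMap_apply, kerMap_apply] at h
    have : ψ (a.1 - b.1) = 0 := by rw [map_sub, h, sub_self]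
    have hz : (a.1 - b.1) = 0 := by
      apply hψinj _ _ this
      rw [map_sub]
      rw [LinearMap.mem_ker.mp a.2, LinearMap.mem_ker.mp b.2, sub_self]
    exact Subtype.ext (by rwa [sub_eq_zero] at hz)
  exact le_antisymm (LinearMap.finrank_le_finrank_of_injective h2)
    (LinearMap.finrank_le_finrank_of_injective h1)

lemma nullity_perturb (M : Matrix n n (ZMod 2)) (v : n) (h0 : M v v = 0) :
    nullity (Matrix.of fun a b => M a b + M a v * M v b) = nullity M := by
  set B := Matrix.of fun a b => M a b + M a v * M v b with hB
  have hBM : ∀ x, B.mulVecLin x = M.mulVecLin (phiMap M v x) := fun x => mulVec_perturb M v x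
  have hMB : ∀ x, M.mulVecLin x = B.mulVecLin (phiMap M v x) := by
    intro x
    rw [hBM (phiMap M v x), phiMap_invol M v h0 x]
  refine (nullity_eq_of_kerMaps M B (phiMap M v) (phiMap M v) ?_ ?_ ?_ ?_).symm
  · intro x hx; rw [← hBM]; exact hx
  · intro x hx; rw [← hMB]; exact hx
  · intro x _ hx
    have := congrArg (phiMap M v) hx
    rwa [phiMap_invol M v h0, map_zero] at this
  · intro x _ hx
    have := congrArg (phiMap M v) hx
    rwa [phiMap_invol M v h0, map_zero] at this

/-- Extension map for the pivot lemma. -/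
noncomputable def extMap (A : Matrix n n (ZMod 2)) (v : n) :
    ({z : n // z ≠ v} → ZMod 2) →ₗ[ZMod 2] (n → ZMod 2) where
  toFun y := fun z => if h : z = v then ∑ t : {z : n // z ≠ v}, A v t.1 * y t else y ⟨z, h⟩
  map_add' x y := by
    funext z
    by_cases h : z = v <;> simp [h, mul_add, Finset.sum_add_distrib]
  map_smul' c y := by
    funext z
    by_cases h : z = v
    · simp only [h, dif_pos, RingHom.id_apply, Pi.smul_apply, smul_eq_mul, Finset.mul_sum]
      exact Finset.sum_congr rfl (fun t _ => by simp; ring)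
    · simp [h]

lemma zmod2_add_eq_zero : ∀ a b : ZMod 2, a + b = 0 → b = a := by decide
lemma zmod2_add_self : ∀ a : ZMod 2, a + a = 0 := by decide

lemma nullity_pivot (A : Matrix n n (ZMod 2)) (hs : ∀ x y, A x y = A y x) (v : n)
    (h1 : A v v = 1) :
    nullity A = nullity (Matrix.of fun x y : {z : n // z ≠ v} =>
      A x.1 y.1 + A v x.1 * A v y.1) := by
  set B := Matrix.of fun x y : {z : n // z ≠ v} => A x.1 y.1 + A v x.1 * A v y.1 with hB
  have hext_v : ∀ y : {z : n // z ≠ v} → ZMod 2,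
      extMap A v y v = ∑ t : {z : n // z ≠ v}, A v t.1 * y t := by
    intro y; simp [extMap]
  have hext_ne : ∀ (y : {z : n // z ≠ v} → ZMod 2) (z : {z : n // z ≠ v}),
      extMap A v y z.1 = y z := by
    intro y z
    simp only [extMap, LinearMap.coe_mk, AddHom.coe_mk, dif_neg z.2, Subtype.coe_eta]
  refine nullity_eq_of_kerMaps A B (extMap A v)
    (LinearMap.funLeft (ZMod 2) (ZMod 2) Subtype.val) ?_ ?_ ?_ ?_
  · -- extension maps ker B into ker A
    intro y hy
    have hyr : ∀ r : {z : n // z ≠ v},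
        ∑ z : {z : n // z ≠ v}, A r.1 z.1 * y z
          = A v r.1 * ∑ t : {z : n // z ≠ v}, A v t.1 * y t := by
      intro r
      have hrow := congrFun hy r
      simp only [Matrix.mulVecLin_apply, Matrix.mulVec, dotProduct, hB,
        Matrix.of_apply, Pi.zero_apply] at hrow
      rw [Finset.sum_congr rfl (fun z _ => add_mul (A r.1 z.1) (A v r.1 * A v z.1) (y z)),
        Finset.sum_add_distrib] at hrow
      have h2 : ∑ z : {z : n // z ≠ v}, A v r.1 * A v z.1 * y z
          = A v r.1 * ∑ t : {z : n // z ≠ v}, A v t.1 * y t := by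
        rw [Finset.mul_sum]
        exact Finset.sum_congr rfl (fun t _ => by ring)
      rw [h2] at hrow
      exact (zmod2_add_eq_zero _ _ hrow).symm
    funext r
    simp only [Matrix.mulVecLin_apply, Matrix.mulVec, dotProduct, Pi.zero_apply]
    rw [sum_split v (fun z => A r z * extMap A v y z), hext_v y,
      Finset.sum_congr rfl (fun z _ => by rw [hext_ne y z] :
        ∀ z ∈ Finset.univ, A r z.1 * extMap A v y z.1 = A r z.1 * y z)]
    by_cases hr : r = v
    · subst hr
      rw [h1, one_mul]
      exact zmod2_add_self _
    · rw [hyr ⟨r, hr⟩, hs r v]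
      exact zmod2_add_self _
  · -- restriction maps ker A into ker B
    intro x hx
    have hrow : ∀ r : n, A r v * x v + ∑ z : {z : n // z ≠ v}, A r z.1 * x z.1 = 0 := by
      intro r
      have := congrFun hx r
      simp only [Matrix.mulVecLin_apply, Matrix.mulVec, dotProduct,
        Pi.zero_apply] at this
      rwa [sum_split v (fun z => A r z * x z)] at this
    have hS : ∑ z : {z : n // z ≠ v}, A v z.1 * x z.1 = x v := by
      have := hrow v
      rw [h1, one_mul] at this
      exact zmod2_add_eq_zero _ _ this
    funext r
    simp only [Matrix.mulVecLin_apply, Matrix.mulVec, dotProduct, hB,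
      Matrix.of_apply, Pi.zero_apply, LinearMap.funLeft_apply]
    rw [Finset.sum_congr rfl
        (fun z _ => add_mul (A r.1 z.1) (A v r.1 * A v z.1) (x z.1)),
      Finset.sum_add_distrib]
    have h2 : ∑ z : {z : n // z ≠ v}, A v r.1 * A v z.1 * x z.1
        = A v r.1 * x v := by
      rw [Finset.sum_congr rfl (fun t _ => mul_assoc (A v r.1) (A v t.1) (x t.1)),
        ← Finset.mul_sum, hS]
    have h3 : ∑ z : {z : n // z ≠ v}, A r.1 z.1 * x z.1 = A r.1 v * x v :=
      zmod2_add_eq_zero _ _ (hrow r.1)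
    rw [h2, h3, hs r.1 v]
    exact zmod2_add_self _
  · -- extension injective on kernel
    intro y _ hy0
    funext t
    have := congrFun hy0 t.1
    rwa [hext_ne y t] at this
  · -- restriction injective on kernel
    intro x hx hx0
    have hzero : ∀ z : {z : n // z ≠ v}, x z.1 = 0 := fun z => congrFun hx0 z
    have hrowv := congrFun hx v
    simp only [Matrix.mulVecLin_apply, Matrix.mulVec, dotProduct,
      Pi.zero_apply] at hrowv
    rw [sum_split v (fun z => A v z * x z), h1, one_mul] at hrowv
    have hsum0 : ∑ z : {z : n // z ≠ v}, A v z.1 * x z.1 = 0 :=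
      Finset.sum_eq_zero (fun z _ => by rw [hzero z, mul_zero])
    rw [hsum0, add_zero] at hrowv
    funext z
    by_cases hz : z = v
    · rw [hz]; exact hrowv
    · exact hzero ⟨z, hz⟩

end LinAlg


lemma nullity_reindex {n m : Type} [Fintype n] [DecidableEq n] [Fintype m] [DecidableEq m]
    (e : m ≃ n) (M : Matrix n n (ZMod 2)) :
    nullity (M.submatrix e e) = nullity M := by
  unfold nullity
  rw [Matrix.rank_submatrix M e e, Fintype.card_congr e]

lemma zmod2_cases : ∀ a : ZMod 2, a = 0 ∨ a = 1 := by decide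

section Scenarios
variable {V : Type} [DecidableEq V] [Fintype V]

/-- Equiv between subtypes of pointwise-equal Boolean predicates. -/
def equivOfEq {p q : V → Bool} (h : ∀ x, q x = p x) :
    {x // q x = true} ≃ {x // p x = true} where
  toFun x := ⟨x.1, by rw [← h x.1]; exact x.2⟩
  invFun x := ⟨x.1, by rw [h x.1]; exact x.2⟩
  left_inv x := Subtype.ext rfl
  right_inv x := Subtype.ext rfl

/-- Equiv between a punctured subtype and the subtype of the punctured predicate. -/
def equivErase {p q : V → Bool} (v : V) (hpq : ∀ x, x ≠ v → q x = p x)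
    (hpv : p v = true) (hqv : q v = false) :
    {z : {x // p x = true} // z ≠ ⟨v, hpv⟩} ≃ {x // q x = true} where
  toFun z := ⟨z.1.1, by
    rw [hpq z.1.1 (fun hz => z.2 (Subtype.ext hz))]; exact z.1.2⟩
  invFun x := ⟨⟨x.1, by
      have hxv : x.1 ≠ v := fun hz => by
        have h2 := x.2; rw [hz, hqv] at h2; exact Bool.noConfusion h2
      rw [← hpq x.1 hxv]; exact x.2⟩,
    fun h => by
      have hxv : x.1 ≠ v := fun hz => by
        have h2 := x.2; rw [hz, hqv] at h2; exact Bool.noConfusion h2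
      exact hxv (congrArg Subtype.val h)⟩
  left_inv z := Subtype.ext (Subtype.ext rfl)
  right_inv x := Subtype.ext rfl

lemma scenarioA (M N : Matrix V V (ZMod 2)) (p q : V → Bool) (v : V)
    (hpq : ∀ x, q x = p x) (hpv : p v = true) (hd : M v v = 0)
    (hmat : ∀ x y, N x y = M x y + M x v * M v y) :
    nullity (M.submatrix (Subtype.val : {x // p x = true} → V) Subtype.val)
      = nullity (N.submatrix (Subtype.val : {x // q x = true} → V) Subtype.val) := by
  have e : {x // q x = true} ≃ {x // p x = true} := equivOfEq hpq
  set MS := M.submatrix (Subtype.val : {x // p x = true} → V) Subtype.val with hMS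
  have hsub : N.submatrix (Subtype.val : {x // q x = true} → V) Subtype.val
      = (Matrix.of fun a b => MS a b + MS a ⟨v, hpv⟩ * MS ⟨v, hpv⟩ b).submatrix
          (equivOfEq hpq) (equivOfEq hpq) := by
    ext i j
    simp only [Matrix.submatrix_apply, Matrix.of_apply, hMS, equivOfEq,
      Equiv.coe_fn_mk, Matrix.submatrix_apply]
    exact hmat i.1 j.1
  have e := equivOfEq hpq
  rw [hsub, nullity_reindex, nullity_perturb MS ⟨v, hpv⟩ hd]

lemma scenarioB (M N : Matrix V V (ZMod 2)) (p q : V → Bool) (v : V)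
    (hpq : ∀ x, x ≠ v → q x = p x) (hpv : p v = true) (hqv : q v = false)
    (hsym : ∀ x y, M x y = M y x) (hd : M v v = 1)
    (hmat : ∀ x y, x ≠ v → y ≠ v → N x y = M x y + M v x * M v y) :
    nullity (M.submatrix (Subtype.val : {x // p x = true} → V) Subtype.val)
      = nullity (N.submatrix (Subtype.val : {x // q x = true} → V) Subtype.val) := by
  set MS := M.submatrix (Subtype.val : {x // p x = true} → V) Subtype.val with hMS
  have hMSsym : ∀ x y, MS x y = MS y x := fun x y => hsym x.1 y.1
  have hpiv := nullity_pivot MS hMSsym ⟨v, hpv⟩ hd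
  have e := equivErase v hpq hpv hqv
  have hsub : N.submatrix (Subtype.val : {x // q x = true} → V) Subtype.val
      = (Matrix.of fun x y : {z : {x // p x = true} // z ≠ ⟨v, hpv⟩} =>
          MS x.1 y.1 + MS ⟨v, hpv⟩ x.1 * MS ⟨v, hpv⟩ y.1).submatrix
          (equivErase v hpq hpv hqv).symm (equivErase v hpq hpv hqv).symm := by
    ext i j
    have hiv : i.1 ≠ v := fun hz => by
      have h2 := i.2; rw [hz, hqv] at h2; exact Bool.noConfusion h2
    have hjv : j.1 ≠ v := fun hz => by
      have h2 := j.2; rw [hz, hqv] at h2; exact Bool.noConfusion h2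
    simp only [Matrix.submatrix_apply, Matrix.of_apply, hMS, equivErase,
      Equiv.symm, Equiv.coe_fn_mk]
    exact hmat i.1 j.1 hiv hjv
  rw [hsub, nullity_reindex, ← hpiv]

end Scenarios

namespace MGraph
variable {V : Type} [DecidableEq V] [Fintype V] (G : MGraph V) (v : V) (T : Finset V)

lemma matT_symm : ∀ x y, G.matT T x y = G.matT T y x := by
  intro x y
  by_cases h : x = y
  · rw [h]
  · simp only [matT, Matrix.of_apply, if_neg h, if_neg (Ne.symm h), G.adj_symm x y]

lemma matT_row_v : ∀ x, x ≠ v → G.matT T v x = (if G.adj v x then 1 else 0) := by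
  intro x hx
  simp only [matT, Matrix.of_apply, if_neg (Ne.symm hx)]

lemma mlc_adj_v : ∀ x, (G.mlc v).adj v x = G.adj v x := by
  intro x
  simp only [mlc]
  rw [if_neg]
  rintro ⟨-, h, -⟩
  rw [G.adj_irrefl v] at h
  exact Bool.noConfusion h

lemma hasR_flipN : ∀ m : Mark, (flipN m).hasR = !m.hasR := by
  intro m; cases m <;> rfl
lemma hasR_flipV : ∀ m : Mark, (flipV m).hasR = (m.hasR != m.isC) := by
  intro m; cases m <;> rfl

/-- Row `v` of the matrix is unchanged by mlc. -/
lemma fact_row : ∀ x, x ≠ v → (G.mlc v).matT T v x = G.matT T v x := by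
  intro x hx
  simp only [matT, Matrix.of_apply, if_neg (Ne.symm hx), mlc_adj_v]

/-- Off-`v` entries of the mlc matrix. -/
lemma fact_off : ∀ x y, x ≠ v → y ≠ v →
    (G.mlc v).matT T x y = G.matT T x y + G.matT T v x * G.matT T v y := by
  intro x y hx hy
  rw [matT_row_v G v T x hx, matT_row_v G v T y hy]
  by_cases hxy : x = y
  · subst hxy
    have hloop : (G.mlc v).loop x = G.loop x := rfl
    by_cases hadj : G.adj v x = true
    · have hmark : (G.mlc v).mark x = flipN (G.mark x) := by
        simp [mlc, hx, hadj]
      simp only [matT, Matrix.of_apply, if_pos rfl, hadj, if_true, hloop, hmark]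
      rcases hm : G.mark x <;> by_cases hT : x ∈ T <;> by_cases hL : G.loop x = true <;>
        simp [hT, hL, flipN, Mark.hasR] <;> decide
    · have hadj' : G.adj v x = false := by
        revert hadj; cases G.adj v x <;> simp
      have hmark : (G.mlc v).mark x = G.mark x := by
        simp [mlc, hx, hadj']
      simp only [matT, Matrix.of_apply, if_pos rfl, hadj', Bool.false_eq_true, if_false,
        hloop, hmark, mul_zero, add_zero, zero_mul]
      simp
  · have hadjxy : (G.mlc v).adj x y
        = (if x ≠ y ∧ G.adj v x = true ∧ G.adj v y = true then !(G.adj x y) else G.adj x y) := rfl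
    simp only [matT, Matrix.of_apply, if_neg hxy, hadjxy]
    by_cases hax : G.adj v x = true <;> by_cases hay : G.adj v y = true <;>
      by_cases he : G.adj x y = true <;>
      simp_all <;> decide

/-- Diagonal entry at `v`. -/
lemma fact_diag_v :
    (G.mlc v).matT T v v = G.matT T v v + (if (G.mark v).isC then 1 else 0) := by
  have hloop : (G.mlc v).loop v = G.loop v := rfl
  have hmark : (G.mlc v).mark v = flipV (G.mark v) := by simp [mlc]
  simp only [matT, Matrix.of_apply, if_pos rfl, hloop, hmark]
  rcases hm : G.mark v <;>
    by_cases hT : v ∈ T <;> by_cases hL : G.loop v = true <;>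
    simp [hT, hL, flipV, Mark.hasR, Mark.isC] <;> decide

/-- The keep predicate is unchanged off `v`. -/
lemma fact_keep_ne : ∀ x, x ≠ v → (G.mlc v).keep T x = G.keep T x := by
  intro x hx
  have hdiag := fact_off G v T x x hx hx
  rw [matT_row_v G v T x hx] at hdiag
  by_cases hadj : G.adj v x = true
  · have hmark : (G.mlc v).mark x = flipN (G.mark x) := by
      simp [mlc, hx, hadj]
    rw [if_pos hadj] at hdiag
    simp only [keep, hmark, hdiag, one_mul]
    rcases zmod2_cases (G.matT T x x) with h0 | h0 <;>
      rcases hm : G.mark x <;> simp [h0, flipN, Mark.isC, Mark.isU] <;> decide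
  · have hadj' : G.adj v x = false := by
      revert hadj; cases G.adj v x <;> simp
    have hmark : (G.mlc v).mark x = G.mark x := by
      simp [mlc, hx, hadj']
    rw [hadj'] at hdiag
    simp only [Bool.false_eq_true, if_false, zero_mul, add_zero] at hdiag
    simp only [keep, hmark, hdiag]

end MGraph

end Aux

/-- the marked-graph bracket is invariant under marked local
complementation, and indeed term by term: for every `T ⊆ V(G)`,
`ν(𝒜(G)_T) = ν(𝒜(G_cru^v)_T)`. -/
theorem bracket_mlc_invariant {V : Type} [DecidableEq V] [Fintype V]
    (G : MGraph V) (v : V) {R : Type*} [CommRing R] (A B d : R) :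
    (∀ T : Finset V, nullity (G.subMat T) = nullity ((G.mlc v).subMat T)) ∧
    G.bracket A B d = (G.mlc v).bracket A B d := by
  have key : ∀ T : Finset V, nullity (G.subMat T) = nullity ((G.mlc v).subMat T) := by
    intro T
    show nullity ((G.matT T).submatrix
        (Subtype.val : {x // G.keep T x = true} → V) Subtype.val)
      = nullity (((G.mlc v).matT T).submatrix
        (Subtype.val : {x // (G.mlc v).keep T x = true} → V) Subtype.val)
    have hmark' : (G.mlc v).mark v = MGraph.flipV (G.mark v) := by simp [MGraph.mlc]
    have habb : ∀ a b : ZMod 2, a + b + b = a := by decide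
    have hmatB' : ∀ x y, x ≠ v → y ≠ v →
        G.matT T x y = (G.mlc v).matT T x y + (G.mlc v).matT T v x * (G.mlc v).matT T v y := by
      intro x y hx hy
      rw [MGraph.fact_row G v T x hx, MGraph.fact_row G v T y hy,
        MGraph.fact_off G v T x y hx hy]
      exact (habb _ _).symm
    rcases zmod2_cases (G.matT T v v) with hd | hd
    · rcases hm : G.mark v with _ | _ | _ | _ | _ | _
      · -- case
        have hNvv : (G.mlc v).matT T v v = 0 := by
          rw [MGraph.fact_diag_v G v T, hd, hm]; simp [Mark.isC]
        have hkv : G.keep T v = true := by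
          simp [MGraph.keep, hm, Mark.isC, Mark.isU, hd]
        have hkv' : (G.mlc v).keep T v = true := by
          rw [hm] at hmark'
          simp [MGraph.keep, hmark', MGraph.flipV, Mark.isC, Mark.isU, hNvv]
        refine scenarioA (G.matT T) ((G.mlc v).matT T) (G.keep T) ((G.mlc v).keep T) v ?_ hkv hd ?_
        · intro x
          by_cases hxv : x = v
          · rw [hxv, hkv', hkv]
          · exact MGraph.fact_keep_ne G v T x hxv
        · intro x y
          by_cases hxv : x = v
          · rw [hxv]
            by_cases hyv : y = v
            · rw [hyv, hNvv, hd]; decide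
            · rw [MGraph.fact_row G v T y hyv, hd, zero_mul, add_zero]
          · by_cases hyv : y = v
            · rw [hyv, hd, mul_zero, add_zero, (G.mlc v).matT_symm T x v,
                MGraph.fact_row G v T x hxv, G.matT_symm T v x]
            · rw [MGraph.fact_off G v T x y hxv hyv, G.matT_symm T v x]
      · -- case
        have hNvv : (G.mlc v).matT T v v = 0 := by
          rw [MGraph.fact_diag_v G v T, hd, hm]; simp [Mark.isC]
        have hkv : G.keep T v = true := by
          simp [MGraph.keep, hm, Mark.isC, Mark.isU, hd]
        have hkv' : (G.mlc v).keep T v = true := by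
          rw [hm] at hmark'
          simp [MGraph.keep, hmark', MGraph.flipV, Mark.isC, Mark.isU, hNvv]
        refine scenarioA (G.matT T) ((G.mlc v).matT T) (G.keep T) ((G.mlc v).keep T) v ?_ hkv hd ?_
        · intro x
          by_cases hxv : x = v
          · rw [hxv, hkv', hkv]
          · exact MGraph.fact_keep_ne G v T x hxv
        · intro x y
          by_cases hxv : x = v
          · rw [hxv]
            by_cases hyv : y = v
            · rw [hyv, hNvv, hd]; decide
            · rw [MGraph.fact_row G v T y hyv, hd, zero_mul, add_zero]
          · by_cases hyv : y = v
            · rw [hyv, hd, mul_zero, add_zero, (G.mlc v).matT_symm T x v,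
                MGraph.fact_row G v T x hxv, G.matT_symm T v x]
            · rw [MGraph.fact_off G v T x y hxv hyv, G.matT_symm T v x]
      · -- case
        have hNvv : (G.mlc v).matT T v v = 1 := by
          rw [MGraph.fact_diag_v G v T, hd, hm]; simp [Mark.isC]
        have hkv : G.keep T v = false := by
          simp [MGraph.keep, hm, Mark.isC, Mark.isU, hd]
        have hkv' : (G.mlc v).keep T v = true := by
          rw [hm] at hmark'
          simp [MGraph.keep, hmark', MGraph.flipV, Mark.isC, Mark.isU, hNvv]
        exact (scenarioB ((G.mlc v).matT T) (G.matT T) ((G.mlc v).keep T) (G.keep T) v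
          (fun x hx => (MGraph.fact_keep_ne G v T x hx).symm) hkv' hkv
          ((G.mlc v).matT_symm T) hNvv hmatB').symm
      · -- case
        have hNvv : (G.mlc v).matT T v v = 1 := by
          rw [MGraph.fact_diag_v G v T, hd, hm]; simp [Mark.isC]
        have hkv : G.keep T v = false := by
          simp [MGraph.keep, hm, Mark.isC, Mark.isU, hd]
        have hkv' : (G.mlc v).keep T v = true := by
          rw [hm] at hmark'
          simp [MGraph.keep, hmark', MGraph.flipV, Mark.isC, Mark.isU, hNvv]
        exact (scenarioB ((G.mlc v).matT T) (G.matT T) ((G.mlc v).keep T) (G.keep T) v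
          (fun x hx => (MGraph.fact_keep_ne G v T x hx).symm) hkv' hkv
          ((G.mlc v).matT_symm T) hNvv hmatB').symm
      · -- case
        have hNvv : (G.mlc v).matT T v v = 0 := by
          rw [MGraph.fact_diag_v G v T, hd, hm]; simp [Mark.isC]
        have hkv : G.keep T v = true := by
          simp [MGraph.keep, hm, Mark.isC, Mark.isU, hd]
        have hkv' : (G.mlc v).keep T v = true := by
          rw [hm] at hmark'
          simp [MGraph.keep, hmark', MGraph.flipV, Mark.isC, Mark.isU, hNvv]
        refine scenarioA (G.matT T) ((G.mlc v).matT T) (G.keep T) ((G.mlc v).keep T) v ?_ hkv hd ?_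
        · intro x
          by_cases hxv : x = v
          · rw [hxv, hkv', hkv]
          · exact MGraph.fact_keep_ne G v T x hxv
        · intro x y
          by_cases hxv : x = v
          · rw [hxv]
            by_cases hyv : y = v
            · rw [hyv, hNvv, hd]; decide
            · rw [MGraph.fact_row G v T y hyv, hd, zero_mul, add_zero]
          · by_cases hyv : y = v
            · rw [hyv, hd, mul_zero, add_zero, (G.mlc v).matT_symm T x v,
                MGraph.fact_row G v T x hxv, G.matT_symm T v x]
            · rw [MGraph.fact_off G v T x y hxv hyv, G.matT_symm T v x]
      · -- case
        have hNvv : (G.mlc v).matT T v v = 0 := by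
          rw [MGraph.fact_diag_v G v T, hd, hm]; simp [Mark.isC]
        have hkv : G.keep T v = true := by
          simp [MGraph.keep, hm, Mark.isC, Mark.isU, hd]
        have hkv' : (G.mlc v).keep T v = true := by
          rw [hm] at hmark'
          simp [MGraph.keep, hmark', MGraph.flipV, Mark.isC, Mark.isU, hNvv]
        refine scenarioA (G.matT T) ((G.mlc v).matT T) (G.keep T) ((G.mlc v).keep T) v ?_ hkv hd ?_
        · intro x
          by_cases hxv : x = v
          · rw [hxv, hkv', hkv]
          · exact MGraph.fact_keep_ne G v T x hxv
        · intro x y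
          by_cases hxv : x = v
          · rw [hxv]
            by_cases hyv : y = v
            · rw [hyv, hNvv, hd]; decide
            · rw [MGraph.fact_row G v T y hyv, hd, zero_mul, add_zero]
          · by_cases hyv : y = v
            · rw [hyv, hd, mul_zero, add_zero, (G.mlc v).matT_symm T x v,
                MGraph.fact_row G v T x hxv, G.matT_symm T v x]
            · rw [MGraph.fact_off G v T x y hxv hyv, G.matT_symm T v x]
    · rcases hm : G.mark v with _ | _ | _ | _ | _ | _
      · -- case
        have hNvv : (G.mlc v).matT T v v = 1 := by
          rw [MGraph.fact_diag_v G v T, hd, hm]; simp [Mark.isC]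
        have hkv : G.keep T v = true := by
          simp [MGraph.keep, hm, Mark.isC, Mark.isU, hd]
        have hkv' : (G.mlc v).keep T v = false := by
          rw [hm] at hmark'
          simp [MGraph.keep, hmark', MGraph.flipV, Mark.isC, Mark.isU, hNvv]
        exact scenarioB (G.matT T) ((G.mlc v).matT T) (G.keep T) ((G.mlc v).keep T) v
          (fun x hx => MGraph.fact_keep_ne G v T x hx) hkv hkv' (G.matT_symm T) hd
          (fun x y hx hy => MGraph.fact_off G v T x y hx hy)
      · -- case
        have hNvv : (G.mlc v).matT T v v = 1 := by
          rw [MGraph.fact_diag_v G v T, hd, hm]; simp [Mark.isC]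
        have hkv : G.keep T v = true := by
          simp [MGraph.keep, hm, Mark.isC, Mark.isU, hd]
        have hkv' : (G.mlc v).keep T v = false := by
          rw [hm] at hmark'
          simp [MGraph.keep, hmark', MGraph.flipV, Mark.isC, Mark.isU, hNvv]
        exact scenarioB (G.matT T) ((G.mlc v).matT T) (G.keep T) ((G.mlc v).keep T) v
          (fun x hx => MGraph.fact_keep_ne G v T x hx) hkv hkv' (G.matT_symm T) hd
          (fun x y hx hy => MGraph.fact_off G v T x y hx hy)
      · -- case
        have hNvv : (G.mlc v).matT T v v = 0 := by
          rw [MGraph.fact_diag_v G v T, hd, hm]; simp [Mark.isC]; decide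
        have hkv : G.keep T v = true := by
          simp [MGraph.keep, hm, Mark.isC, Mark.isU, hd]
        have hkv' : (G.mlc v).keep T v = false := by
          rw [hm] at hmark'
          simp [MGraph.keep, hmark', MGraph.flipV, Mark.isC, Mark.isU, hNvv]
        exact scenarioB (G.matT T) ((G.mlc v).matT T) (G.keep T) ((G.mlc v).keep T) v
          (fun x hx => MGraph.fact_keep_ne G v T x hx) hkv hkv' (G.matT_symm T) hd
          (fun x y hx hy => MGraph.fact_off G v T x y hx hy)
      · -- case
        have hNvv : (G.mlc v).matT T v v = 0 := by
          rw [MGraph.fact_diag_v G v T, hd, hm]; simp [Mark.isC]; decide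
        have hkv : G.keep T v = true := by
          simp [MGraph.keep, hm, Mark.isC, Mark.isU, hd]
        have hkv' : (G.mlc v).keep T v = false := by
          rw [hm] at hmark'
          simp [MGraph.keep, hmark', MGraph.flipV, Mark.isC, Mark.isU, hNvv]
        exact scenarioB (G.matT T) ((G.mlc v).matT T) (G.keep T) ((G.mlc v).keep T) v
          (fun x hx => MGraph.fact_keep_ne G v T x hx) hkv hkv' (G.matT_symm T) hd
          (fun x y hx hy => MGraph.fact_off G v T x y hx hy)
      · -- case
        have hNvv : (G.mlc v).matT T v v = 1 := by
          rw [MGraph.fact_diag_v G v T, hd, hm]; simp [Mark.isC]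
        have hkv : G.keep T v = false := by
          simp [MGraph.keep, hm, Mark.isC, Mark.isU, hd]
        have hkv' : (G.mlc v).keep T v = true := by
          rw [hm] at hmark'
          simp [MGraph.keep, hmark', MGraph.flipV, Mark.isC, Mark.isU, hNvv]
        exact (scenarioB ((G.mlc v).matT T) (G.matT T) ((G.mlc v).keep T) (G.keep T) v
          (fun x hx => (MGraph.fact_keep_ne G v T x hx).symm) hkv' hkv
          ((G.mlc v).matT_symm T) hNvv hmatB').symm
      · -- case
        have hNvv : (G.mlc v).matT T v v = 1 := by
          rw [MGraph.fact_diag_v G v T, hd, hm]; simp [Mark.isC]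
        have hkv : G.keep T v = false := by
          simp [MGraph.keep, hm, Mark.isC, Mark.isU, hd]
        have hkv' : (G.mlc v).keep T v = true := by
          rw [hm] at hmark'
          simp [MGraph.keep, hmark', MGraph.flipV, Mark.isC, Mark.isU, hNvv]
        exact (scenarioB ((G.mlc v).matT T) (G.matT T) ((G.mlc v).keep T) (G.keep T) v
          (fun x hx => (MGraph.fact_keep_ne G v T x hx).symm) hkv' hkv
          ((G.mlc v).matT_symm T) hNvv hmatB').symm
  refine ⟨key, ?_⟩
  have hfl : (G.mlc v).freeLoops = G.freeLoops := rfl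
  unfold MGraph.bracket
  rw [hfl]
  congr 1
  exact Finset.sum_congr rfl (fun T _ => by rw [key T])
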